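/- With q as above, q(1) = P(LIS(T) = 1) = 1/(1 + √p). -/

import Mathlib

/-- Sign-decorated plane binary trees: leaves, and internal nodes carrying a sign
(`true` = ⊕, `false` = ⊖) together with two ordered subtrees. -/
inductive STree : Type
  | leaf : STree
  | node : Bool → STree → STree → STree

namespace STree

/-- `LIS t` is the maximal number of leaves of a positive subtree of `t`
(a subtree all of whose internal nodes carry ⊕): if the root carries ⊕ the LIS values of
the two subtrees add, if it carries ⊖ one takes the maximum. -/
def LIS : STree → ℕ
  | leaf => 1
  | node true l r => LIS l + LIS r
  | node false l r => max (LIS l) (LIS r)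

/-- The probability that the `p`-signed critical binary Bienaymé–Galton–Watson tree
(each vertex independently has 0 or 2 children with probability 1/2 each, and each
internal node independently carries ⊕ with probability `p` and ⊖ with probability `1-p`)
equals a given finite sign-decorated tree. -/
noncomputable def weight (p : ℝ) : STree → ℝ
  | leaf => 1 / 2
  | node s l r => (1 / 2) * (if s then p else 1 - p) * weight p l * weight p r

end STree

/-- `q p k = P(LIS(T) = k)` for the `p`-signed critical binary
Bienaymé–Galton–Watson tree `T`. -/
noncomputable def qLIS (p : ℝ) (k : ℕ) : ℝ :=
  ∑' t : {t : STree // t.LIS = k}, STree.weight p t.1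

deriving instance DecidableEq for STree

open STree

lemma one_le_LIS : ∀ t : STree, 1 ≤ t.LIS
  | .leaf => le_refl 1
  | .node true l r => by
      have h := one_le_LIS l
      simp only [LIS]; omega
  | .node false l r => by
      have h := one_le_LIS l
      simp only [LIS]; omega

lemma LIS_node_eq_one {b : Bool} {l r : STree} :
    (STree.node b l r).LIS = 1 ↔ b = false ∧ l.LIS = 1 ∧ r.LIS = 1 := by
  have hl := one_le_LIS l
  have hr := one_le_LIS r
  cases b
  · simp only [LIS]
    constructor
    · intro h
      exact ⟨by simp, by omega, by omega⟩
    · rintro ⟨-, h1, h2⟩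
      omega
  · simp only [LIS]
    constructor
    · intro h
      omega
    · rintro ⟨h, -⟩
      exact absurd h (by simp)

lemma weight_nonneg {p : ℝ} (hp0 : 0 ≤ p) (hp1 : p ≤ 1) : ∀ t : STree, 0 ≤ weight p t
  | .leaf => by norm_num [weight]
  | .node s l r => by
      have hl := weight_nonneg hp0 hp1 l
      have hr := weight_nonneg hp0 hp1 r
      have hs : (0:ℝ) ≤ if s then p else 1 - p := by cases s <;> simp <;> linarith
      simp only [weight]
      positivity

/-- The finite set of sign-decorated trees with `LIS = 1` and height at most `n`. -/
def Afin : ℕ → Finset STree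
  | 0 => {STree.leaf}
  | n + 1 =>
      insert STree.leaf (((Afin n) ×ˢ (Afin n)).image fun q => STree.node false q.1 q.2)

lemma LIS_of_mem_Afin : ∀ n, ∀ t ∈ Afin n, t.LIS = 1 := by
  intro n
  induction n with
  | zero => intro t ht; simp only [Afin, Finset.mem_singleton] at ht; subst ht; rfl
  | succ n ih =>
      intro t ht
      simp only [Afin, Finset.mem_insert, Finset.mem_image, Finset.mem_product] at ht
      rcases ht with rfl | ⟨⟨l, r⟩, ⟨hl, hr⟩, rfl⟩
      · rfl
      · simp only [LIS, ih l hl, ih r hr]; omega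

lemma Afin_subset_succ : ∀ n, Afin n ⊆ Afin (n + 1) := by
  intro n
  induction n with
  | zero =>
      intro t ht
      simp only [Afin, Finset.mem_singleton] at ht
      simp [Afin, ht]
  | succ n ih =>
      intro t ht
      rw [show Afin (n+1) = insert STree.leaf (((Afin n) ×ˢ (Afin n)).image
          fun q => STree.node false q.1 q.2) from rfl] at ht
      rw [show Afin (n+2) = insert STree.leaf (((Afin (n+1)) ×ˢ (Afin (n+1))).image
          fun q => STree.node false q.1 q.2) from rfl]
      simp only [Finset.mem_insert, Finset.mem_image, Finset.mem_product] at ht ⊢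
      rcases ht with rfl | ⟨⟨l, r⟩, ⟨hl, hr⟩, rfl⟩
      · exact Or.inl rfl
      · exact Or.inr ⟨(l, r), ⟨ih hl, ih hr⟩, rfl⟩

lemma Afin_mono : ∀ {m n : ℕ}, m ≤ n → Afin m ⊆ Afin n := by
  intro m n h
  induction h with
  | refl => exact subset_rfl
  | step h ih => exact ih.trans (Afin_subset_succ _)

lemma mem_Afin_of_LIS : ∀ t : STree, t.LIS = 1 → ∃ n, t ∈ Afin n := by
  intro t
  induction t with
  | leaf => intro _; exact ⟨0, by simp [Afin]⟩
  | node b l r ihl ihr =>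
      intro ht
      rw [LIS_node_eq_one] at ht
      obtain ⟨rfl, hl, hr⟩ := ht
      obtain ⟨m, hm⟩ := ihl hl
      obtain ⟨k, hk⟩ := ihr hr
      refine ⟨max m k + 1, ?_⟩
      simp only [Afin, Finset.mem_insert, Finset.mem_image, Finset.mem_product]
      exact Or.inr ⟨(l, r), ⟨Afin_mono (le_max_left m k) hm, Afin_mono (le_max_right m k) hk⟩, rfl⟩

/-- Truncated sums. -/
noncomputable def useq (p : ℝ) : ℕ → ℝ
  | 0 => 1 / 2
  | n + 1 => 1 / 2 + (1 / 2) * (1 - p) * (useq p n) ^ 2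

lemma sum_Afin (p : ℝ) : ∀ n, ∑ t ∈ Afin n, weight p t = useq p n := by
  intro n
  induction n with
  | zero => simp [Afin, useq, weight]
  | succ n ih =>
      have hleaf : STree.leaf ∉ ((Afin n) ×ˢ (Afin n)).image
          fun q : STree × STree => STree.node false q.1 q.2 := by
        simp
      have hinj : Set.InjOn (fun q : STree × STree => STree.node false q.1 q.2)
          ((Afin n) ×ˢ (Afin n) : Finset (STree × STree)) := by
        intro a _ b _ h
        simp only [STree.node.injEq] at h
        exact Prod.ext h.2.1 h.2.2
      rw [show Afin (n+1) = insert STree.leaf (((Afin n) ×ˢ (Afin n)).image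
          fun q => STree.node false q.1 q.2) from rfl]
      rw [Finset.sum_insert hleaf, Finset.sum_image hinj]
      have : ∑ q ∈ (Afin n) ×ˢ (Afin n), weight p (STree.node false q.1 q.2)
          = (1 / 2) * (1 - p) * (∑ t ∈ Afin n, weight p t) ^ 2 := by
        rw [Finset.sum_product]
        simp only [weight, if_neg (by simp : ¬ false = true)]
        rw [sq]
        rw [Finset.sum_comm]
        simp only [← Finset.sum_mul, ← Finset.mul_sum]
        ring
      rw [this, ih]
      simp only [weight, useq]

set_option maxHeartbeats 1600000 in
theorem qLIS_one (p : ℝ) (hp : p ∈ Set.Ioo (0 : ℝ) 1) :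
    qLIS p 1 = 1 / (1 + Real.sqrt p) := by
  obtain ⟨hp0, hp1⟩ := hp
  set s := Real.sqrt p with hs
  have hs2 : s ^ 2 = p := Real.sq_sqrt hp0.le
  have hs0 : 0 < s := Real.sqrt_pos.mpr hp0
  have hs1 : s < 1 := by nlinarith
  set r : ℝ := 1 / (1 + s) with hr
  have h1s : (0:ℝ) < 1 + s := by linarith
  have hfix : 1 / 2 + (1 / 2) * (1 - p) * r ^ 2 = r := by
    rw [hr]
    field_simp
    nlinarith [hs2]
  have hrpos : 0 < r := by positivity
  -- useq is nonnegative and bounded by r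
  have hu0 : ∀ n, 0 ≤ useq p n := by
    intro n
    induction n with
    | zero => norm_num [useq]
    | succ n ih => simp only [useq]; nlinarith
  have hur : ∀ n, useq p n ≤ r := by
    intro n
    induction n with
    | zero =>
        simp only [useq, hr]
        rw [div_le_div_iff₀ (by norm_num) h1s]
        linarith
    | succ n ih =>
        have h := hu0 n
        calc useq p (n+1) = 1 / 2 + (1/2) * (1-p) * (useq p n) ^ 2 := rfl
          _ ≤ 1 / 2 + (1/2) * (1-p) * r ^ 2 := by
              have hsq : (useq p n) ^ 2 ≤ r ^ 2 := by nlinarith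
              nlinarith
          _ = r := hfix
  -- geometric convergence rate
  have hrate : ∀ n, r - useq p n ≤ (1 - s) ^ n * r := by
    intro n
    induction n with
    | zero =>
        simp only [pow_zero, one_mul, useq]
        linarith [hu0 0]
    | succ n ih =>
        have h0 := hu0 n
        have h1 := hur n
        have key : r - useq p (n+1) = (1/2) * (1-p) * (r + useq p n) * (r - useq p n) := by
          simp only [useq]
          nlinarith [hfix]
        have hfac : (1/2) * (1-p) * (r + useq p n) ≤ 1 - s := by
          have h1p : 1 - p = (1 - s) * (1 + s) := by nlinarith
          have hr1 : r * (1 + s) = 1 := by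
            rw [hr]; field_simp
          nlinarith
        have hnn : 0 ≤ r - useq p n := by linarith
        calc r - useq p (n+1) = (1/2) * (1-p) * (r + useq p n) * (r - useq p n) := key
          _ ≤ (1 - s) * (r - useq p n) := by nlinarith
          _ ≤ (1 - s) * ((1 - s) ^ n * r) := by nlinarith
          _ = (1 - s) ^ (n+1) * r := by ring
  -- weights are nonnegative
  have hw : ∀ t : STree, 0 ≤ weight p t := weight_nonneg hp0.le hp1.le
  -- the partial sums over finsets of the index type
  have key : HasSum (fun t : {t : STree // t.LIS = 1} => STree.weight p t.1) r := by
    refine hasSum_of_isLUB_of_nonneg r (fun t => hw t.1) ?_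
    constructor
    · -- upper bound
      rintro x ⟨F, rfl⟩
      have hex : ∃ n, ∀ x ∈ F, (x : {t : STree // t.LIS = 1}).1 ∈ Afin n := by
        classical
        induction F using Finset.induction_on with
        | empty => exact ⟨0, by simp⟩
        | @insert a Fs hx ih =>
            obtain ⟨n, hn⟩ := ih
            obtain ⟨m, hm⟩ := mem_Afin_of_LIS a.1 a.2
            refine ⟨max m n, ?_⟩
            intro x hxmem
            rcases Finset.mem_insert.mp hxmem with rfl | hxs
            · exact Afin_mono (le_max_left m n) hm
            · exact Afin_mono (le_max_right m n) (hn x hxs)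
      obtain ⟨n, hn⟩ := hex
      have hsub : F.image (fun x => (x : {t : STree // t.LIS = 1}).1) ⊆ Afin n := by
        intro t ht
        obtain ⟨x, hx, rfl⟩ := Finset.mem_image.mp ht
        exact hn x hx
      have hinj : Set.InjOn (fun x : {t : STree // t.LIS = 1} => x.1) F :=
        fun a _ b _ h => Subtype.ext h
      calc ∑ x ∈ F, weight p x.1
          = ∑ t ∈ F.image (fun x => (x : {t : STree // t.LIS = 1}).1), weight p t :=
            (Finset.sum_image hinj).symm
        _ ≤ ∑ t ∈ Afin n, weight p t :=
            Finset.sum_le_sum_of_subset_of_nonneg hsub (fun t _ _ => hw t)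
        _ = useq p n := sum_Afin p n
        _ ≤ r := hur n
    · -- least upper bound
      intro b hb
      have hbn : ∀ n, useq p n ≤ b := by
        intro n
        classical
        set G : Finset {t : STree // t.LIS = 1} :=
          (Afin n).attach.map
            ⟨fun x => ⟨x.1, LIS_of_mem_Afin n x.1 x.2⟩,
             fun a b h => by have h' := congrArg Subtype.val h; exact Subtype.ext h'⟩ with hG
        have : ∑ x ∈ G, weight p x.1 = useq p n := by
          rw [hG, Finset.sum_map]
          show ∑ x ∈ (Afin n).attach, weight p x.1 = useq p n
          rw [Finset.sum_attach (Afin n) (fun t => weight p t)]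
          exact sum_Afin p n
        have hmem : ∑ x ∈ G, weight p x.1 ∈
            Set.range (fun F : Finset {t : STree // t.LIS = 1} => ∑ x ∈ F, weight p x.1) :=
          ⟨G, rfl⟩
        calc useq p n = ∑ x ∈ G, weight p x.1 := this.symm
          _ ≤ b := hb hmem
      -- r ≤ b using the geometric rate
      have htend : Filter.Tendsto (fun n => (1 - s) ^ n * r) Filter.atTop (nhds 0) := by
        have : Filter.Tendsto (fun n : ℕ => (1 - s) ^ n) Filter.atTop (nhds 0) := by
          apply tendsto_pow_atTop_nhds_zero_of_lt_one <;> linarith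
        simpa using this.mul_const r
      have : ∀ n, r - b ≤ (1 - s) ^ n * r := fun n => by linarith [hrate n, hbn n]
      have hle : r - b ≤ 0 := ge_of_tendsto htend (Filter.Eventually.of_forall this)
      linarith
  rw [qLIS]
  exact key.tsum_eq
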